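/- Let T > 0 be fixed. There exists a constant c_T > 0 such that for all a ≥ 1 and all b with |b| ≥ a, κ(T,b) := tanh(T·√(a²+b²)) / (√(a²+b²) - a·tanh(T·√(a²+b²))) ≥ c_T / |b|. -/
import Mathlib

lemma tanh_pos_aux {x : ℝ} (hx : 0 < x) : 0 < Real.tanh x := by
  rw [Real.tanh_eq_sinh_div_cosh]
  exact div_pos (Real.sinh_pos_iff.2 hx) (Real.cosh_pos x)

lemma tanh_le_one_aux (x : ℝ) : Real.tanh x ≤ 1 := by
  rw [Real.tanh_eq_sinh_div_cosh, div_le_one (Real.cosh_pos x)]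
  exact (Real.sinh_lt_cosh x).le

lemma tanh_mono_aux {x y : ℝ} (h0 : 0 ≤ x) (hxy : x ≤ y) :
    Real.tanh x ≤ Real.tanh y := by
  rw [Real.tanh_eq_sinh_div_cosh, Real.tanh_eq_sinh_div_cosh,
    div_le_div_iff₀ (Real.cosh_pos x) (Real.cosh_pos y)]
  have h : 0 ≤ Real.sinh (y - x) := Real.sinh_nonneg_iff.2 (by linarith)
  rw [Real.sinh_sub] at h
  nlinarith [Real.cosh_pos x, Real.cosh_pos y]

theorem riccati_kappa_lower_bound_large_b (T : ℝ) (hT : 0 < T) :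
    ∃ c : ℝ, 0 < c ∧ ∀ a b : ℝ, 1 ≤ a → a ≤ |b| →
      Real.tanh (T * Real.sqrt (a ^ 2 + b ^ 2)) /
          (Real.sqrt (a ^ 2 + b ^ 2) - a * Real.tanh (T * Real.sqrt (a ^ 2 + b ^ 2)))
        ≥ c / |b| := by
  have h2 : (0:ℝ) < Real.sqrt 2 := Real.sqrt_pos.2 (by norm_num)
  refine ⟨Real.tanh (T * Real.sqrt 2) / Real.sqrt 2,
    div_pos (tanh_pos_aux (by positivity)) h2, ?_⟩
  intro a b ha hab
  have ha0 : (0:ℝ) < a := by linarith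
  have hb1 : (1:ℝ) ≤ |b| := le_trans ha hab
  have hb0 : (0:ℝ) < |b| := by linarith
  set r := Real.sqrt (a ^ 2 + b ^ 2) with hr
  have hb2 : 0 < b ^ 2 := by
    have : (1:ℝ) ≤ |b| ^ 2 := by nlinarith
    rw [sq_abs] at this; linarith
  have hrpos : 0 < r := Real.sqrt_pos.2 (by nlinarith)
  have hr2 : r ^ 2 = a ^ 2 + b ^ 2 := Real.sq_sqrt (by nlinarith)
  -- r > a
  have hra : a < r := by nlinarith
  -- r ≥ √2
  have hrs2 : Real.sqrt 2 ≤ r := by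
    rw [hr]
    apply Real.sqrt_le_sqrt
    have : a ^ 2 ≥ 1 := by nlinarith
    have : b ^ 2 ≥ 1 := by nlinarith [sq_abs b, hb1]
    nlinarith [sq_abs b]
  -- r ≤ √2 * |b|
  have hrle : r ≤ Real.sqrt 2 * |b| := by
    rw [hr, show Real.sqrt 2 * |b| = Real.sqrt (2 * b ^ 2) by
      rw [Real.sqrt_mul (by norm_num), Real.sqrt_sq_eq_abs]]
    apply Real.sqrt_le_sqrt
    nlinarith [sq_abs b, abs_nonneg b]
  have htanh := tanh_mono_aux (x := T * Real.sqrt 2) (y := T * r)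
    (by positivity) (by nlinarith)
  have htle : Real.tanh (T * r) ≤ 1 := tanh_le_one_aux _
  have htpos : 0 < Real.tanh (T * r) := tanh_pos_aux (by positivity)
  have hden : 0 < r - a * Real.tanh (T * r) := by nlinarith
  have hdenle : r - a * Real.tanh (T * r) ≤ Real.sqrt 2 * |b| := by nlinarith
  rw [ge_iff_le, div_div]
  exact div_le_div₀ (le_of_lt htpos) htanh (by positivity) hdenle
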